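/- Let f : [0,∞) → ℝ satisfy (H1) and suppose there exists a₀ > 0 such that f(x) ≠ 0 for all x ≥ a₀. If ∫_{a₀}^∞ 1/|f(x)| dx < ∞, then f(x)/x → −∞ as x → ∞. -/

import Mathlib

open MeasureTheory Set Filter Topology

/-- For `f` satisfying (H1) with `f x ≠ 0` for `x ≥ a₀`, if
`∫_{a₀}^∞ 1/|f x| dx < ∞` then `f x / x → -∞` as `x → ∞`. -/
theorem stmt1 (f : ℝ → ℝ) (θ : ℝ) (hθ : 0 ≤ θ)
    (hf_cont : ContinuousOn f (Ici 0)) (hf0 : f 0 = 0)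
    (hH1 : ∀ x ≥ (0:ℝ), ∀ y ≥ (0:ℝ), f (x + y) - f y ≤ θ * x)
    (a₀ : ℝ) (ha₀ : 0 < a₀) (hfne : ∀ x ≥ a₀, f x ≠ 0)
    (hint : (∫⁻ x in Ici a₀, ENNReal.ofReal (1 / |f x|)) < ⊤) :
    Tendsto (fun x => f x / x) atTop atBot := by
  -- the nondecreasing majorant
  set h : ℝ → ℝ := fun x => max (θ * max x 0) (θ * max x 0 - f (max x 0)) with hh
  have hg_mono : ∀ a b : ℝ, 0 ≤ a → a ≤ b → θ * a - f a ≤ θ * b - f b := by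
    intro a b ha hab
    have := hH1 (b - a) (by linarith) a ha
    have hba : b - a + a = b := by ring
    rw [hba] at this
    linarith
  have hh_mono : Monotone h := by
    intro a b hab
    have h1 : max a 0 ≤ max b 0 := max_le_max hab le_rfl
    apply max_le_max
    · nlinarith [le_max_right b (0:ℝ)]
    · exact hg_mono _ _ (le_max_right a 0) h1
  -- |f x| ≤ h x for x ≥ 0
  have hfle : ∀ x : ℝ, 0 ≤ x → |f x| ≤ h x := by
    intro x hx
    have hmx : max x 0 = x := max_eq_left hx
    have hfθ : f x ≤ θ * x := by
      have := hH1 x hx 0 le_rfl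
      simpa [hf0] using this
    rw [abs_le]
    constructor
    · have : θ * x - f x ≤ h x := by rw [hh]; simp only [hmx]; exact le_max_right _ _
      nlinarith [mul_nonneg hθ hx]
    · have : θ * x ≤ h x := by rw [hh]; simp only [hmx]; exact le_max_left _ _
      linarith
  have hhpos : ∀ x : ℝ, a₀ ≤ x → 0 < h x := by
    intro x hx
    have h1 : |f x| ≤ h x := hfle x (le_trans ha₀.le hx)
    have h2 : 0 < |f x| := abs_pos.2 (hfne x hx)
    linarith
  -- the measure with density 1 / h
  set μ : Measure ℝ := volume.withDensity (fun x => ENNReal.ofReal (1 / h x)) with hμ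
  have hhmeas : Measurable h := hh_mono.measurable
  have hdens : Measurable (fun x => ENNReal.ofReal (1 / h x)) := by
    simpa [one_div] using (hhmeas.inv.ennreal_ofReal)
  have hμapply : ∀ s : Set ℝ, MeasurableSet s →
      μ s = ∫⁻ x in s, ENNReal.ofReal (1 / h x) := by
    intro s hs
    rw [hμ, withDensity_apply _ hs]
  have hμtot : μ (Ici a₀) < ⊤ := by
    rw [hμapply _ measurableSet_Ici]
    refine lt_of_le_of_lt ?_ hint
    apply setLIntegral_mono' measurableSet_Ici
    intro x hx
    apply ENNReal.ofReal_le_ofReal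
    apply one_div_le_one_div_of_le (abs_pos.2 (hfne x hx)) (hfle x (le_trans ha₀.le hx))
  -- tail measure tends to zero
  have htail : Tendsto (fun b => μ (Ici b)) atTop (𝓝 0) := by
    have h0 : (⋂ b : ℝ, Ici b) = ∅ := by
      ext x
      simp only [mem_iInter, mem_Ici, mem_empty_iff_false, iff_false, not_forall, not_le]
      exact ⟨x + 1, by linarith⟩
    have := tendsto_measure_iInter_atTop (μ := μ)
      (s := fun b : ℝ => Ici b)
      (fun b => measurableSet_Ici.nullMeasurableSet)
      (fun a b hab => Ici_subset_Ici.2 hab)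
      ⟨a₀, hμtot.ne⟩
    rw [h0] at this
    simpa [Function.comp_def] using this
  -- key: h x / x → ∞
  have hkey : Tendsto (fun x => h x / x) atTop atTop := by
    rw [tendsto_atTop]
    intro M
    set M' : ℝ := max M 1 with hM'
    have hM'pos : 0 < M' := lt_of_lt_of_le one_pos (le_max_right _ _)
    have hεpos : (0:ℝ) < 1 / (2 * M') := by positivity
    have := (ENNReal.tendsto_atTop_zero.1 htail) (ENNReal.ofReal (1 / (2 * M')))
      (by simpa using hεpos)
    obtain ⟨b, hb⟩ := this
    have key : ∀ y : ℝ, max (2 * b) (2 * a₀) ≤ y → M ≤ h y / y := by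
      intro y hy
      have hyb : 2 * b ≤ y := le_trans (le_max_left _ _) hy
      have hya : 2 * a₀ ≤ y := le_trans (le_max_right _ _) hy
      have hypos : 0 < y := by linarith
      have hhy : 0 < h y := hhpos y (by linarith)
      -- integral over [y/2, y]
      have hsub : Icc (y/2) y ⊆ Ici (max b b) := by
        intro t ht
        simp only [max_self, mem_Ici]
        have := ht.1
        linarith
      have hle1 : μ (Icc (y/2) y) ≤ ENNReal.ofReal (1 / (2 * M')) :=
        (measure_mono (by simpa using hsub)).trans (hb (max b b) (le_max_left _ _))
      have hge : ENNReal.ofReal (1 / h y) * ENNReal.ofReal (y / 2) ≤ μ (Icc (y/2) y) := by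
        rw [hμapply _ measurableSet_Icc]
        have : ENNReal.ofReal (1 / h y) * ENNReal.ofReal (y / 2)
            = ∫⁻ _ in Icc (y/2) y, ENNReal.ofReal (1 / h y) := by
          rw [setLIntegral_const, Real.volume_Icc]
          congr 1
          congr 1
          ring
        rw [this]
        apply setLIntegral_mono' measurableSet_Icc
        intro t ht
        apply ENNReal.ofReal_le_ofReal
        apply one_div_le_one_div_of_le (hhpos t (by linarith [ht.1])) (hh_mono ht.2)
      have hcomb : ENNReal.ofReal (1 / h y * (y / 2)) ≤ ENNReal.ofReal (1 / (2 * M')) := by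
        rw [ENNReal.ofReal_mul (by positivity)]
        exact le_trans hge hle1
      have hreal : 1 / h y * (y / 2) ≤ 1 / (2 * M') := by
        have := (ENNReal.ofReal_le_ofReal_iff hεpos.le).1 hcomb
        exact this
      -- from hreal: y / (2 h y) ≤ 1/(2 M'), so M' y ≤ h y
      have : M' * y ≤ h y := by
        rw [div_mul_eq_mul_div, one_mul, div_le_div_iff₀ hhy (by positivity)] at hreal
        nlinarith
      have : M' ≤ h y / y := (le_div_iff₀ hypos).2 (by linarith [this])
      exact le_trans (le_max_left M 1) this
    exact eventually_atTop.2 ⟨max (2 * b) (2 * a₀), key⟩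
  -- finish
  have heq : ∀ᶠ x in atTop, f x / x = θ - h x / x := by
    have h1 : ∀ᶠ x in atTop, θ < h x / x := hkey.eventually (eventually_gt_atTop θ)
    filter_upwards [h1, eventually_gt_atTop (0:ℝ), eventually_ge_atTop a₀] with x hx hx0 hxa
    have hmx : max x 0 = x := max_eq_left hx0.le
    have hθx : θ * x < h x := by
      rw [lt_div_iff₀ hx0] at hx; linarith
    have hhx : h x = θ * x - f x := by
      have hx2 : h x = max (θ * x) (θ * x - f x) := by rw [hh]; simp [hmx]
      rcases max_cases (θ * x) (θ * x - f x) with ⟨he, _⟩ | ⟨he, _⟩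
      · rw [hx2, he] at hθx; linarith
      · rw [hx2, he]
    rw [hhx]
    field_simp
    ring
  have : Tendsto (fun x => θ + -(h x / x)) atTop atBot :=
    tendsto_atBot_add_const_left atTop θ (tendsto_neg_atBot_iff.2 hkey)
  refine this.congr' ?_
  filter_upwards [heq] with x hx
  rw [hx]; ring
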